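/- Let D(x) = Wx + b be an affine map on ℝⁿ with ‖W‖ (spectral norm) ≤ 1. Then D is nonexpansive, and for any convex g with L-Lipschitz gradient and τ > 0, the MS-RED operator G = ∇g + τ(I - D) is 1/(L+2τ)-cocoercive. -/

import Mathlib

open RealInnerProductSpace

section Aux

variable {F : Type*} [NormedAddCommGroup F] [InnerProductSpace ℝ F] [CompleteSpace F]

private lemma line_hasDerivAt {g : F → ℝ} {g' : F → F}
    (hgrad : ∀ x, HasGradientAt g (g' x) x) (x u : F) (t : ℝ) :
    HasDerivAt (fun s : ℝ => g (x + s • u)) ⟪g' (x + t • u), u⟫ t := by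
  have hline : HasDerivAt (fun s : ℝ => x + s • u) u t := by
    simpa using ((hasDerivAt_id t).smul_const u).const_add x
  have hf := (hasGradientAt_iff_hasFDerivAt.mp (hgrad (x + t • u))).comp_hasDerivAt t hline
  simp [InnerProductSpace.toDual_apply_apply] at hf; exact hf

private lemma descent_lemma {g : F → ℝ} {g' : F → F} {L : ℝ} (hL : 0 < L)
    (hgrad : ∀ x, HasGradientAt g (g' x) x)
    (hlip : ∀ x y, ‖g' x - g' y‖ ≤ L * ‖x - y‖) (x u : F) :
    g (x + u) ≤ g x + ⟪g' x, u⟫ + L / 2 * ‖u‖ ^ 2 := by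
  have hcg' : Continuous g' := by
    refine (LipschitzWith.of_dist_le_mul (K := Real.toNNReal L) (f := g') ?_).continuous
    intro a c
    rw [dist_eq_norm, dist_eq_norm, Real.coe_toNNReal L hL.le]
    exact hlip a c
  have hcd : Continuous fun t : ℝ => ⟪g' (x + t • u), u⟫ := by
    exact (Continuous.inner (hcg'.comp (by continuity)) continuous_const)
  have key : ∫ t in (0:ℝ)..1, ⟪g' (x + t • u), u⟫ = g (x + u) - g x := by
    have := intervalIntegral.integral_eq_sub_of_hasDerivAt
      (f := fun s : ℝ => g (x + s • u)) (f' := fun t : ℝ => ⟪g' (x + t • u), u⟫)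
      (fun t _ => line_hasDerivAt hgrad x u t) (hcd.intervalIntegrable 0 1)
    simpa using this
  have hbound : ∫ t in (0:ℝ)..1, ⟪g' (x + t • u), u⟫
      ≤ ∫ t in (0:ℝ)..1, (⟪g' x, u⟫ + (L * ‖u‖ ^ 2) * t) := by
    refine intervalIntegral.integral_mono_on zero_le_one (hcd.intervalIntegrable 0 1)
      ((continuous_const.add (continuous_const.mul continuous_id)).intervalIntegrable 0 1) ?_
    intro t ht
    have h1 : ⟪g' (x + t • u), u⟫ = ⟪g' x, u⟫ + ⟪g' (x + t • u) - g' x, u⟫ := by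
      rw [inner_sub_left]; ring
    rw [h1]
    have h2 : ⟪g' (x + t • u) - g' x, u⟫ ≤ ‖g' (x + t • u) - g' x‖ * ‖u‖ :=
      real_inner_le_norm _ _
    have h3 : ‖g' (x + t • u) - g' x‖ ≤ L * (t * ‖u‖) := by
      have := hlip (x + t • u) x
      simpa [norm_smul, abs_of_nonneg ht.1] using this
    have h4 : ‖g' (x + t • u) - g' x‖ * ‖u‖ ≤ L * (t * ‖u‖) * ‖u‖ :=
      mul_le_mul_of_nonneg_right h3 (norm_nonneg u)
    nlinarith [norm_nonneg u]
  have hrhs : ∫ t in (0:ℝ)..1, (⟪g' x, u⟫ + (L * ‖u‖ ^ 2) * t)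
      = ⟪g' x, u⟫ + L / 2 * ‖u‖ ^ 2 := by
    rw [intervalIntegral.integral_add (intervalIntegrable_const)
      ((intervalIntegral.intervalIntegrable_id).const_mul _),
      intervalIntegral.integral_const, intervalIntegral.integral_const_mul,
      integral_id]
    simp; ring
  rw [key, hrhs] at hbound
  linarith

private lemma first_order {g : F → ℝ} {g' : F → F}
    (hconv : ConvexOn ℝ Set.univ g)
    (hgrad : ∀ x, HasGradientAt g (g' x) x) (x u : F) :
    g x + ⟪g' x, u⟫ ≤ g (x + u) := by
  set φ : ℝ → ℝ := fun t => g (x + t • u) with hφ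
  have hφconv : ConvexOn ℝ Set.univ φ := by
    have := hconv.comp_affineMap (AffineMap.lineMap x (x + u) : ℝ →ᵃ[ℝ] F)
    have heq : (g ∘ (AffineMap.lineMap x (x + u) : ℝ →ᵃ[ℝ] F)) = φ := by
      funext t
      simp [hφ, AffineMap.lineMap_apply, add_comm]
    rw [heq] at this
    simpa using this
  have hslope := hφconv.le_slope_of_hasDerivAt (Set.mem_univ (0:ℝ)) (Set.mem_univ (1:ℝ))
    zero_lt_one (by simpa using line_hasDerivAt hgrad x u 0)
  rw [slope_def_field] at hslope
  have h0 : φ 0 = g x := by simp [hφ]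
  have h1 : φ 1 = g (x + u) := by simp [hφ]
  rw [h0, h1] at hslope
  simp at hslope
  linarith

private lemma bh_step {g : F → ℝ} {g' : F → F} {L : ℝ} (hL : 0 < L)
    (hconv : ConvexOn ℝ Set.univ g)
    (hgrad : ∀ x, HasGradientAt g (g' x) x)
    (hlip : ∀ x y, ‖g' x - g' y‖ ≤ L * ‖x - y‖) (x y : F) :
    g y + ⟪g' y, x - y⟫ + 1 / (2 * L) * ‖g' x - g' y‖ ^ 2 ≤ g x := by
  set d := g' x - g' y with hd
  set z := x - L⁻¹ • d with hz
  have hlow : g y + ⟪g' y, z - y⟫ ≤ g z := by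
    have := first_order hconv hgrad y (z - y)
    simpa using this
  have hup : g z ≤ g x + ⟪g' x, z - x⟫ + L / 2 * ‖z - x‖ ^ 2 := by
    have := descent_lemma hL hgrad hlip x (z - x)
    simpa using this
  have hzx : z - x = -(L⁻¹ • d) := by rw [hz]; abel
  have hinner_d : ⟪d, z - x⟫ = -(L⁻¹ * ‖d‖ ^ 2) := by
    rw [hzx, inner_neg_right, real_inner_smul_right, real_inner_self_eq_norm_sq]
  have h1 : ⟪g' x, z - x⟫ = ⟪g' y, z - x⟫ - L⁻¹ * ‖d‖ ^ 2 := by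
    have hsplit : ⟪g' x, z - x⟫ - ⟪g' y, z - x⟫ = ⟪d, z - x⟫ := by
      rw [hd, inner_sub_left]
    rw [hinner_d] at hsplit
    linarith
  have h2 : ⟪g' y, z - x⟫ = ⟪g' y, z - y⟫ - ⟪g' y, x - y⟫ := by
    rw [← inner_sub_right]; congr 1; abel
  have h3 : ‖z - x‖ ^ 2 = (L⁻¹) ^ 2 * ‖d‖ ^ 2 := by
    rw [hzx, norm_neg, norm_smul, mul_pow]
    congr 1
    rw [Real.norm_eq_abs, sq_abs]
  rw [h3] at hup
  rw [h1, h2] at hup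
  have hL' : L / 2 * (L⁻¹ ^ 2 * ‖d‖ ^ 2) = 1 / (2 * L) * ‖d‖ ^ 2 := by
    field_simp
  rw [hL'] at hup
  have hL'' : (L:ℝ)⁻¹ = 2 * (1 / (2 * L)) := by field_simp
  nlinarith [hlow, hup]

/-- Baillon–Haddad: the gradient is 1/L-cocoercive (in cleared-denominator form). -/
private lemma baillon_haddad {g : F → ℝ} {g' : F → F} {L : ℝ} (hL : 0 < L)
    (hconv : ConvexOn ℝ Set.univ g)
    (hgrad : ∀ x, HasGradientAt g (g' x) x)
    (hlip : ∀ x y, ‖g' x - g' y‖ ≤ L * ‖x - y‖) (x y : F) :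
    ‖g' x - g' y‖ ^ 2 ≤ L * ⟪g' x - g' y, x - y⟫ := by
  have h1 := bh_step hL hconv hgrad hlip x y
  have h2 := bh_step hL hconv hgrad hlip y x
  have hnorm : ‖g' y - g' x‖ = ‖g' x - g' y‖ := by rw [norm_sub_rev]
  rw [hnorm] at h2
  have hx : ⟪g' x, y - x⟫ = -⟪g' x, x - y⟫ := by
    rw [← inner_neg_right]; congr 1; abel
  rw [hx] at h2
  have hsum : ⟪g' x - g' y, x - y⟫ = ⟪g' x, x - y⟫ - ⟪g' y, x - y⟫ := by
    rw [inner_sub_left]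
  have hLpos : 0 < 2 * L := by linarith
  have h3 : 2 * (1 / (2 * L) * ‖g' x - g' y‖ ^ 2) ≤ ⟪g' x - g' y, x - y⟫ := by
    rw [hsum]; linarith
  have h4 : ‖g' x - g' y‖ ^ 2 = L * (2 * (1 / (2 * L) * ‖g' x - g' y‖ ^ 2)) := by
    field_simp
  rw [h4]
  exact mul_le_mul_of_nonneg_left h3 hL.le

end Aux

set_option maxHeartbeats 1000000 in
theorem affine_denoiser_msred {n : ℕ}
    (W : EuclideanSpace ℝ (Fin n) →L[ℝ] EuclideanSpace ℝ (Fin n))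
    (b : EuclideanSpace ℝ (Fin n)) (hW : ‖W‖ ≤ 1)
    (D : EuclideanSpace ℝ (Fin n) → EuclideanSpace ℝ (Fin n))
    (hDdef : ∀ x, D x = W x + b)
    (g : EuclideanSpace ℝ (Fin n) → ℝ)
    (g' : EuclideanSpace ℝ (Fin n) → EuclideanSpace ℝ (Fin n)) (L τ : ℝ)
    (hL : 0 < L) (hτ : 0 < τ)
    (hconv : ConvexOn ℝ Set.univ g)
    (hgrad : ∀ x, HasGradientAt g (g' x) x)
    (hlip : ∀ x y, ‖g' x - g' y‖ ≤ L * ‖x - y‖)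
    (G : EuclideanSpace ℝ (Fin n) → EuclideanSpace ℝ (Fin n))
    (hG : ∀ x, G x = g' x + τ • (x - D x)) :
    (∀ x y, ‖D x - D y‖ ≤ ‖x - y‖) ∧
      (∀ x y : EuclideanSpace ℝ (Fin n),
        (1 / (L + 2 * τ)) * ‖G x - G y‖ ^ 2 ≤ ⟪G x - G y, x - y⟫) := by
  have hDsub : ∀ x y, D x - D y = W (x - y) := by
    intro x y; rw [hDdef, hDdef, map_sub]; abel
  have hWle : ∀ u : EuclideanSpace ℝ (Fin n), ‖W u‖ ≤ ‖u‖ := by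
    intro u
    calc ‖W u‖ ≤ ‖W‖ * ‖u‖ := W.le_opNorm u
      _ ≤ 1 * ‖u‖ := mul_le_mul_of_nonneg_right hW (norm_nonneg u)
      _ = ‖u‖ := one_mul _
  constructor
  · intro x y; rw [hDsub]; exact hWle _
  · intro x y
    obtain ⟨u, hu⟩ : ∃ u, u = x - y := ⟨_, rfl⟩
    obtain ⟨A, hA⟩ : ∃ A, A = g' x - g' y := ⟨_, rfl⟩
    obtain ⟨B, hB⟩ : ∃ B, B = τ • (u - W u) := ⟨_, rfl⟩
    have hGxy : G x - G y = A + B := by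
      have h5 : u - W u = (x - D x) - (y - D y) := by rw [hu, ← hDsub]; abel
      rw [hG, hG, hA, hB, h5]
      module
    -- cocoercivity of A
    have hAc : ‖A‖ ^ 2 ≤ L * ⟪A, u⟫ := by
      rw [hA, hu]; exact baillon_haddad hL hconv hgrad hlip x y
    -- cocoercivity of B
    have hBc : ‖B‖ ^ 2 ≤ 2 * τ * ⟪B, u⟫ := by
      have hkey : ‖u - W u‖ ^ 2 ≤ 2 * ⟪u - W u, u⟫ := by
        have hexp : ‖u - W u‖ ^ 2 = ‖u‖ ^ 2 - 2 * ⟪u, W u⟫ + ‖W u‖ ^ 2 := by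
          rw [← real_inner_self_eq_norm_sq, inner_sub_sub_self,
            real_inner_self_eq_norm_sq, real_inner_self_eq_norm_sq,
            real_inner_comm (W u) u]
          ring
        have hinner : ⟪u - W u, u⟫ = ‖u‖ ^ 2 - ⟪u, W u⟫ := by
          rw [inner_sub_left, real_inner_self_eq_norm_sq, real_inner_comm]
        have hWu := hWle u
        nlinarith [norm_nonneg (W u), norm_nonneg u]
      have hBnorm : ‖B‖ ^ 2 = τ ^ 2 * ‖u - W u‖ ^ 2 := by
        rw [hB, norm_smul, mul_pow, Real.norm_eq_abs, sq_abs]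
      have hBinner : ⟪B, u⟫ = τ * ⟪u - W u, u⟫ := by
        rw [hB, real_inner_smul_left]
      rw [hBnorm, hBinner]
      nlinarith [sq_nonneg τ]
    -- combine
    rw [hGxy, ← hu, inner_add_left]
    have habn : ‖A + B‖ ^ 2 ≤ (‖A‖ + ‖B‖) ^ 2 :=
      pow_le_pow_left₀ (norm_nonneg _) (norm_add_le A B) 2
    have hsA : (0:ℝ) ≤ ⟪A, u⟫ := by nlinarith [sq_nonneg ‖A‖]
    have hsB : (0:ℝ) ≤ ⟪B, u⟫ := by nlinarith [sq_nonneg ‖B‖]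
    have hden : (0:ℝ) < L + 2 * τ := by linarith
    rw [div_mul_eq_mul_div, one_mul, div_le_iff₀ hden]
    generalize hqq : ‖A + B‖ = q at habn ⊢
    generalize haa : ‖A‖ = a at hAc hsA habn ⊢
    generalize hcc : ‖B‖ = c at hBc hsB habn ⊢
    generalize hss : ⟪A, u⟫ = s at hAc hsA ⊢
    generalize htt : ⟪B, u⟫ = t at hBc hsB ⊢
    have ha : (0:ℝ) ≤ a := haa ▸ norm_nonneg A
    have hc : (0:ℝ) ≤ c := hcc ▸ norm_nonneg B
    have hτ2 : (0:ℝ) ≤ 2 * τ := by linarith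
    have hP : (0:ℝ) ≤ L * t + 2 * τ * s := by
      have := mul_nonneg hL.le hsB; have := mul_nonneg hτ2 hsA; linarith
    have hprod : a ^ 2 * c ^ 2 ≤ (L * s) * (2 * τ * t) :=
      mul_le_mul hAc hBc (sq_nonneg _) (mul_nonneg hL.le hsA)
    have h1 : (2 * (a * c)) ^ 2 ≤ (L * t + 2 * τ * s) ^ 2 := by
      nlinarith [hprod, sq_nonneg (L * t - 2 * τ * s)]
    have hab2 : 2 * (a * c) ≤ L * t + 2 * τ * s := by
      nlinarith [h1, hP, mul_nonneg ha hc]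
    nlinarith [hab2, hAc, hBc, habn]
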